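/- Let ω, g ∈ ℝ and let q : ℝ → ℝ be C² with ∫_ℝ e^{−|σ|}|q(σ)| dσ < ∞. Suppose q satisfies the nonlocal Euler–Lagrange equation −q''(τ) − ω² q(τ) + (g/2)·∫_ℝ e^{−|τ−σ|} q(σ) dσ = 0 for all τ ∈ ℝ. Then q is four times continuously differentiable and satisfies the fourth-order ordinary differential equation q''''(τ) + (ω² − 1) q''(τ) + (g − ω²) q(τ) = 0 for all τ ∈ ℝ. -/

import Mathlib

open MeasureTheory

lemma aux_dom {q : ℝ → ℝ}
    (hint : Integrable (fun σ : ℝ => Real.exp (-|σ|) * |q σ|))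
    (h : ℝ → ℝ) (hc : Continuous h) (C : ℝ) (s : Set ℝ) (hs : MeasurableSet s)
    (hb : ∀ σ ∈ s, |h σ| ≤ C * (Real.exp (-|σ|) * |q σ|)) :
    IntegrableOn h s := by
  apply Integrable.mono ((hint.const_mul C).restrict) hc.aestronglyMeasurable.restrict
  rw [ae_restrict_iff' hs]
  filter_upwards with σ hσ
  simp only [Real.norm_eq_abs]
  exact (hb σ hσ).trans (le_abs_self _)

noncomputable def auxA (q : ℝ → ℝ) (τ : ℝ) : ℝ := ∫ σ in Set.Iic τ, Real.exp σ * q σ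
noncomputable def auxB (q : ℝ → ℝ) (τ : ℝ) : ℝ := ∫ σ in Set.Ici τ, Real.exp (-σ) * q σ
noncomputable def auxI (q : ℝ → ℝ) (τ : ℝ) : ℝ := ∫ σ : ℝ, Real.exp (-|τ - σ|) * q σ

section aux
variable {q : ℝ → ℝ} (hqc : Continuous q)
    (hint : Integrable (fun σ : ℝ => Real.exp (-|σ|) * |q σ|))

include hqc hint

lemma auxA_intOn (τ : ℝ) : IntegrableOn (fun σ => Real.exp σ * q σ) (Set.Iic τ) := by
  apply aux_dom hint _ (Real.continuous_exp.mul hqc) (Real.exp (2*|τ|)) _ measurableSet_Iic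
  intro σ hσ
  have hσ : σ ≤ τ := hσ
  rw [Pi.mul_apply, abs_mul, Real.abs_exp, ← mul_assoc]
  apply mul_le_mul_of_nonneg_right _ (abs_nonneg _)
  rw [← Real.exp_add, Real.exp_le_exp]
  rcases abs_cases σ with ⟨h1,h2⟩|⟨h1,h2⟩ <;> rcases abs_cases τ with ⟨h3,h4⟩|⟨h3,h4⟩ <;> linarith

lemma auxB_intOn (τ : ℝ) : IntegrableOn (fun σ => Real.exp (-σ) * q σ) (Set.Ici τ) := by
  apply aux_dom hint _ (by fun_prop) (Real.exp (2*|τ|)) _ measurableSet_Ici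
  intro σ hσ
  have hσ : τ ≤ σ := hσ
  rw [abs_mul, Real.abs_exp, ← mul_assoc]
  apply mul_le_mul_of_nonneg_right _ (abs_nonneg _)
  rw [← Real.exp_add, Real.exp_le_exp]
  rcases abs_cases σ with ⟨h1,h2⟩|⟨h1,h2⟩ <;> rcases abs_cases τ with ⟨h3,h4⟩|⟨h3,h4⟩ <;> linarith

lemma auxI_int (τ : ℝ) : Integrable (fun σ => Real.exp (-|τ - σ|) * q σ) := by
  rw [← integrableOn_univ]
  apply aux_dom hint _ (by fun_prop)
    (Real.exp |τ|) _ MeasurableSet.univ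
  intro σ _
  rw [abs_mul, Real.abs_exp, ← mul_assoc]
  apply mul_le_mul_of_nonneg_right _ (abs_nonneg _)
  rw [← Real.exp_add, Real.exp_le_exp]
  have h1 : |σ| - |τ| ≤ |σ - τ| := abs_sub_abs_le_abs_sub σ τ
  rw [abs_sub_comm] at h1
  linarith

lemma auxI_eq (τ : ℝ) :
    auxI q τ = Real.exp (-τ) * auxA q τ + Real.exp τ * auxB q τ := by
  have hsplit := intervalIntegral.integral_Iic_add_Ioi (b := τ)
    ((auxI_int hqc hint τ).integrableOn) ((auxI_int hqc hint τ).integrableOn)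
  rw [auxI, ← hsplit]
  congr 1
  · rw [auxA, ← integral_const_mul]
    apply setIntegral_congr_fun measurableSet_Iic
    intro σ hσ
    dsimp only
    have h : |τ - σ| = τ - σ := abs_of_nonneg (by simp only [Set.mem_Iic] at hσ; linarith)
    rw [h, ← mul_assoc, ← Real.exp_add]
    ring_nf
  · rw [auxB, integral_Ici_eq_integral_Ioi, ← integral_const_mul]
    apply setIntegral_congr_fun measurableSet_Ioi
    intro σ hσ
    dsimp only
    have h : |τ - σ| = -(τ - σ) := abs_of_nonpos (by simp only [Set.mem_Ioi] at hσ; linarith)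
    rw [h, ← mul_assoc, ← Real.exp_add]
    ring_nf

lemma auxA_deriv (τ : ℝ) : HasDerivAt (auxA q) (Real.exp τ * q τ) τ := by
  have hfc : Continuous (fun σ => Real.exp σ * q σ) := Real.continuous_exp.mul hqc
  have h1 : auxA q = fun u => (∫ σ in Set.Iic (0:ℝ), Real.exp σ * q σ)
      + ∫ x in (0:ℝ)..u, Real.exp x * q x := by
    funext u
    have h2 := intervalIntegral.integral_Iic_sub_Iic (auxA_intOn hqc hint 0)
      (auxA_intOn hqc hint u)
    rw [auxA, ← h2]
    ring
  rw [h1]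
  exact ((intervalIntegral.integral_hasDerivAt_right (hfc.intervalIntegrable 0 τ)
    (hfc.stronglyMeasurableAtFilter _ _) hfc.continuousAt).const_add _)

lemma auxB_deriv (τ : ℝ) : HasDerivAt (auxB q) (-(Real.exp (-τ) * q τ)) τ := by
  have hq'c : Continuous (fun s : ℝ => q (-s)) := hqc.comp continuous_neg
  have hint' : Integrable (fun σ : ℝ => Real.exp (-|σ|) * |q (-σ)|) := by
    have h := ((Measure.measurePreserving_neg (volume : Measure ℝ)).integrable_comp_emb
      (Homeomorph.neg ℝ).isClosedEmbedding.measurableEmbedding).mpr hint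
    simpa [Function.comp_def, abs_neg] using h
  have hB : auxB q = fun t => auxA (fun s => q (-s)) (-t) := by
    funext t
    have h := integral_comp_neg_Iic (-t) (fun σ => Real.exp (-σ) * q σ)
    simp only [neg_neg] at h
    rw [auxB, auxA, integral_Ici_eq_integral_Ioi, ← h]
  rw [hB]
  have h1 : HasDerivAt (auxA (fun s => q (-s))) (Real.exp (-τ) * q (- -τ)) (-τ) :=
    auxA_deriv hq'c hint' (-τ)
  have h2 := h1.comp τ (hasDerivAt_neg τ)
  simpa [Function.comp_def] using h2

lemma auxI_deriv (τ : ℝ) :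
    HasDerivAt (auxI q) (Real.exp τ * auxB q τ - Real.exp (-τ) * auxA q τ) τ := by
  have hIeq : auxI q = fun t => Real.exp (-t) * auxA q t + Real.exp t * auxB q t :=
    funext (auxI_eq hqc hint)
  rw [hIeq]
  have h1 : HasDerivAt (fun t : ℝ => Real.exp (-t)) (-Real.exp (-τ)) τ := by
    simpa using ((hasDerivAt_neg τ).exp)
  have h2 := (h1.mul (auxA_deriv hqc hint τ)).add
    ((Real.hasDerivAt_exp τ).mul (auxB_deriv hqc hint τ))
  refine h2.congr_deriv ?_
  ring

lemma auxI1_deriv (τ : ℝ) :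
    HasDerivAt (fun t => Real.exp t * auxB q t - Real.exp (-t) * auxA q t)
      (auxI q τ - 2 * q τ) τ := by
  have h1 : HasDerivAt (fun t : ℝ => Real.exp (-t)) (-Real.exp (-τ)) τ := by
    simpa using ((hasDerivAt_neg τ).exp)
  have h2 := ((Real.hasDerivAt_exp τ).mul (auxB_deriv hqc hint τ)).sub
    (h1.mul (auxA_deriv hqc hint τ))
  refine h2.congr_deriv ?_
  rw [auxI_eq hqc hint τ]
  have key : Real.exp (-τ) * Real.exp τ = 1 := by rw [← Real.exp_add]; simp
  linear_combination (-(2 * q τ)) * key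

lemma auxI_contDiff : ContDiff ℝ 2 (auxI q) := by
  have d1 : Differentiable ℝ (auxI q) := fun τ => (auxI_deriv hqc hint τ).differentiableAt
  have e1 : deriv (auxI q) = fun t => Real.exp t * auxB q t - Real.exp (-t) * auxA q t :=
    funext fun τ => (auxI_deriv hqc hint τ).deriv
  have d2 : Differentiable ℝ (fun t => Real.exp t * auxB q t - Real.exp (-t) * auxA q t) :=
    fun τ => (auxI1_deriv hqc hint τ).differentiableAt
  have e2 : deriv (fun t => Real.exp t * auxB q t - Real.exp (-t) * auxA q t)
      = fun τ => auxI q τ - 2 * q τ := funext fun τ => (auxI1_deriv hqc hint τ).deriv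
  rw [show (2 : WithTop ℕ∞) = 1 + 1 by norm_num, contDiff_succ_iff_deriv]
  refine ⟨d1, by simp, ?_⟩
  rw [e1, contDiff_one_iff_deriv, e2]
  exact ⟨d2, (d1.continuous.sub (continuous_const.mul hqc))⟩

end aux

/-- A `C²` solution (with exponentially weighted summability) of the nonlocal
Euler–Lagrange equation `−q'' − ω²q + (g/2)∫ e^{−|τ−σ|} q(σ) dσ = 0` is four
times continuously differentiable and satisfies
`q'''' + (ω²−1)q'' + (g−ω²)q = 0`. -/
theorem stmt11 (ω g : ℝ) (q : ℝ → ℝ) (hq : ContDiff ℝ 2 q)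
    (hint : Integrable (fun σ : ℝ => Real.exp (-|σ|) * |q σ|))
    (hEL : ∀ τ : ℝ, -(deriv (deriv q) τ) - ω ^ 2 * q τ
        + (g / 2) * ∫ σ : ℝ, Real.exp (-|τ - σ|) * q σ = 0) :
    ContDiff ℝ 4 q ∧
    ∀ τ : ℝ, iteratedDeriv 4 q τ + (ω ^ 2 - 1) * iteratedDeriv 2 q τ
        + (g - ω ^ 2) * q τ = 0 := by
  have hqc : Continuous q := hq.continuous
  have hq11 : ContDiff ℝ (1 + 1) q := by
    rw [show ((1 : WithTop ℕ∞) + 1) = 2 by norm_num]; exact hq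
  have hq1 : ContDiff ℝ 1 (deriv q) := (contDiff_succ_iff_deriv.mp hq11).2.2
  have hdq : Differentiable ℝ (deriv q) := hq1.differentiable one_ne_zero
  -- the second derivative in terms of the nonlocal integral
  have hq2 : deriv (deriv q) = fun τ => -(ω ^ 2 * q τ) + (g / 2) * auxI q τ := by
    funext τ
    have h := hEL τ
    rw [show (∫ σ : ℝ, Real.exp (-|τ - σ|) * q σ) = auxI q τ from rfl] at h
    linarith
  have hIc2 : ContDiff ℝ 2 (auxI q) := auxI_contDiff hqc hint
  have hRHS : ContDiff ℝ 2 (fun τ => -(ω ^ 2 * q τ) + (g / 2) * auxI q τ) :=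
    ((contDiff_const.mul hq).neg).add (contDiff_const.mul hIc2)
  constructor
  · rw [show (4 : WithTop ℕ∞) = 3 + 1 by norm_num, contDiff_succ_iff_deriv]
    refine ⟨hq.differentiable (by norm_num), by simp, ?_⟩
    rw [show (3 : WithTop ℕ∞) = 2 + 1 by norm_num, contDiff_succ_iff_deriv]
    refine ⟨hdq, by simp, ?_⟩
    rw [hq2]
    exact hRHS
  · intro τ
    have h2eq : iteratedDeriv 2 q = deriv (deriv q) := by
      rw [show (2 : ℕ) = 1 + 1 from rfl, iteratedDeriv_succ, iteratedDeriv_one]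
    have h4eq : iteratedDeriv 4 q = deriv (deriv (deriv (deriv q))) := by
      rw [show (4 : ℕ) = 1 + 1 + 1 + 1 from rfl, iteratedDeriv_succ, iteratedDeriv_succ,
        iteratedDeriv_succ, iteratedDeriv_one]
    -- third derivative
    have hE : ∀ t : ℝ, HasDerivAt (fun τ => -(ω ^ 2 * q τ) + (g / 2) * auxI q τ)
        (-(ω ^ 2 * deriv q t) + (g / 2) * (Real.exp t * auxB q t - Real.exp (-t) * auxA q t)) t :=
      fun t => (((hq.differentiable (by norm_num) t).hasDerivAt.const_mul (ω ^ 2)).neg).add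
        ((auxI_deriv hqc hint t).const_mul (g / 2))
    have hE' : deriv (fun τ => -(ω ^ 2 * q τ) + (g / 2) * auxI q τ)
        = fun t => -(ω ^ 2 * deriv q t)
          + (g / 2) * (Real.exp t * auxB q t - Real.exp (-t) * auxA q t) :=
      funext fun t => (hE t).deriv
    have hE1 : HasDerivAt (fun t => -(ω ^ 2 * deriv q t)
          + (g / 2) * (Real.exp t * auxB q t - Real.exp (-t) * auxA q t))
        (-(ω ^ 2 * deriv (deriv q) τ) + (g / 2) * (auxI q τ - 2 * q τ)) τ :=
      (((hdq τ).hasDerivAt.const_mul (ω ^ 2)).neg).add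
        ((auxI1_deriv hqc hint τ).const_mul (g / 2))
    rw [h4eq, h2eq, hq2, hE', hE1.deriv]
    have hY : deriv (deriv q) τ = -(ω ^ 2 * q τ) + (g / 2) * auxI q τ := by rw [hq2]
    linear_combination (-(ω ^ 2)) * hY
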